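/- Let s be an integer with 3 ≤ s ≤ 8, and let P(z) = 1 + Σ_{k=1}^s a_k z^k be a real polynomial. Suppose P^{(k)}(-2s) ≥ 0 for all k = 0, 1, ..., s, and that (1/2)(a₁² - (1-a₁)²/s) ≥ a₂. Then P(z) = (1 + z/(2s))^s. -/

import Mathlib

open Polynomial Finset

/-- Uniqueness for polynomials related to `Π̂_{s/s,2}`: for `3 ≤ s ≤ 8`, if a
real polynomial `P` of degree at most `s` with constant term `1` satisfies
`P^{(k)}(-2s) ≥ 0` for `k = 0, …, s` and
`(1/2)(a₁² - (1-a₁)²/s) ≥ a₂`, then `P(z) = (1 + z/(2s))^s`. -/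
theorem unique_poly_of_absMonotonic (s : ℕ) (hs3 : 3 ≤ s) (hs8 : s ≤ 8)
    (P : Polynomial ℝ) (hP0 : P.coeff 0 = 1) (hdeg : P.natDegree ≤ s)
    (hmon : ∀ k ≤ s, 0 ≤ (Polynomial.derivative^[k] P).eval (-(2 * (s : ℝ))))
    (hnl : P.coeff 2 ≤
      (1 / 2) * ((P.coeff 1) ^ 2 - (1 - P.coeff 1) ^ 2 / (s : ℝ))) :
    P = (1 + Polynomial.C (1 / (2 * (s : ℝ))) * Polynomial.X) ^ s := by
  have hS : (3:ℝ) ≤ (s:ℝ) := by exact_mod_cast hs3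
  have hSpos : (0:ℝ) < (s:ℝ) := by linarith
  set r : ℝ := 2 * (s:ℝ) with hr
  have hrpos : 0 < r := by positivity
  have hrne : r ≠ 0 := ne_of_gt hrpos
  set Q : ℝ[X] := taylor (-r) P with hQ
  have hQdeg : Q.natDegree ≤ s := by rw [hQ, natDegree_taylor]; exact hdeg
  have hPQ : P = taylor r Q := by rw [hQ, taylor_taylor]; simp
  -- nonnegativity of Taylor coefficients
  have hbnn : ∀ k, 0 ≤ Q.coeff k := by
    intro k
    by_cases hk : k ≤ s
    · have h1 : (k.factorial : ℝ) * Q.coeff k = (derivative^[k] P).eval (-r) := by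
        rw [hQ, taylor_coeff, ← factorial_smul_hasseDeriv]
        simp [nsmul_eq_mul]
      have h2 := hmon k hk
      rw [← h1] at h2
      have hf : (0:ℝ) < (k.factorial : ℝ) := by exact_mod_cast k.factorial_pos
      nlinarith
    · rw [Q.coeff_eq_zero_of_natDegree_lt (lt_of_le_of_lt hQdeg (Nat.lt_of_not_le hk))]
  -- coefficient formula
  have hcoeff : ∀ n, P.coeff n = ∑ k ∈ range (s+1),
      Q.coeff k * (r ^ (k - n) * (k.choose n : ℝ)) := by
    intro n
    conv_lhs => rw [hPQ, Q.as_sum_range' (s+1) (lt_of_le_of_lt hQdeg (Nat.lt_succ_self s))]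
    rw [map_sum, finset_sum_coeff]
    refine Finset.sum_congr rfl fun k _ => ?_
    rw [taylor_monomial, coeff_C_mul, coeff_X_add_C_pow]
  set t : ℕ → ℝ := fun k => Q.coeff k * r ^ k with ht
  have htnn : ∀ k, 0 ≤ t k := fun k => mul_nonneg (hbnn k) (by positivity)
  -- sum of t is 1
  have h0 : ∑ k ∈ range (s+1), t k = 1 := by
    rw [← hP0, hcoeff 0]
    refine Finset.sum_congr rfl fun k _ => ?_
    simp [ht]
  set M : ℝ := ∑ k ∈ range (s+1), (k:ℝ) * t k with hM
  set V : ℝ := ∑ k ∈ range (s+1), (k:ℝ) * ((k:ℝ) - 1) * t k with hV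
  -- first moment
  have h1 : P.coeff 1 * r = M := by
    rw [hcoeff 1, Finset.sum_mul, hM]
    refine Finset.sum_congr rfl fun k _ => ?_
    match k with
    | 0 => simp
    | (j+1) =>
      rw [Nat.add_sub_cancel, Nat.choose_one_right]
      simp only [ht]
      rw [pow_succ]
      push_cast
      ring
  -- second moment
  have h2 : P.coeff 2 * (2 * r ^ 2) = V := by
    rw [hcoeff 2, Finset.sum_mul, hV]
    refine Finset.sum_congr rfl fun k _ => ?_
    match k with
    | 0 => simp
    | 1 => simp
    | (j+2) =>
      rw [show j + 2 - 2 = j by omega, Nat.cast_choose_two]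
      simp only [ht]
      rw [show j + 2 = j + 1 + 1 from rfl, pow_succ, pow_succ]
      push_cast
      ring
  -- M ≤ s
  have hMle : M ≤ (s:ℝ) := by
    calc M ≤ ∑ k ∈ range (s+1), (s:ℝ) * t k := by
            refine Finset.sum_le_sum fun k hk => ?_
            have : (k:ℝ) ≤ (s:ℝ) := by
              exact_mod_cast Nat.lt_succ_iff.mp (Finset.mem_range.mp hk)
            exact mul_le_mul_of_nonneg_right this (htnn k)
      _ = (s:ℝ) := by rw [← Finset.mul_sum, h0, mul_one]
  -- Cauchy-Schwarz: M^2 ≤ ∑ k^2 t k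
  have hCS : M ^ 2 ≤ ∑ k ∈ range (s+1), (k:ℝ)^2 * t k := by
    have key := Finset.sum_mul_sq_le_sq_mul_sq (range (s+1))
      (fun k => Real.sqrt (t k)) (fun k => (k:ℝ) * Real.sqrt (t k))
    have e1 : ∑ k ∈ range (s+1), Real.sqrt (t k) * ((k:ℝ) * Real.sqrt (t k)) = M := by
      rw [hM]; refine Finset.sum_congr rfl fun k _ => ?_
      rw [show Real.sqrt (t k) * ((k:ℝ) * Real.sqrt (t k))
            = (k:ℝ) * (Real.sqrt (t k) * Real.sqrt (t k)) by ring,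
          Real.mul_self_sqrt (htnn k)]
    have e2 : ∑ k ∈ range (s+1), (Real.sqrt (t k))^2 = 1 := by
      rw [← h0]; refine Finset.sum_congr rfl fun k _ => ?_
      exact Real.sq_sqrt (htnn k)
    have e3 : ∑ k ∈ range (s+1), ((k:ℝ) * Real.sqrt (t k))^2
        = ∑ k ∈ range (s+1), (k:ℝ)^2 * t k := by
      refine Finset.sum_congr rfl fun k _ => ?_
      rw [mul_pow, Real.sq_sqrt (htnn k)]
    rw [e1, e2, e3, one_mul] at key
    exact key
  -- V = ∑ k^2 t - M
  have hVM : V = (∑ k ∈ range (s+1), (k:ℝ)^2 * t k) - M := by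
    rw [hV, hM, ← Finset.sum_sub_distrib]
    refine Finset.sum_congr rfl fun k _ => ?_
    ring
  have hJ : M ^ 2 - M ≤ V := by rw [hVM]; linarith
  -- the quadratic constraint
  have hc1 : P.coeff 1 = M / r := by field_simp [← h1]; exact h1
  have hc2 : P.coeff 2 = V / (2 * r ^ 2) := by
    rw [← h2]; field_simp
  have hnl' : V ≤ M ^ 2 - (2 * (s:ℝ) - M) ^ 2 / (s:ℝ) := by
    rw [hc1, hc2] at hnl
    rw [hr] at *
    have h := hnl
    rw [div_le_iff₀ (by positivity : (0:ℝ) < 2 * (2*(s:ℝ))^2)] at h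
    have hexp : (1 / 2) * ((M / (2*(s:ℝ))) ^ 2 - (1 - M / (2*(s:ℝ))) ^ 2 / (s:ℝ))
        * (2 * (2*(s:ℝ)) ^ 2) = M ^ 2 - (2 * (s:ℝ) - M) ^ 2 / (s:ℝ) := by
      field_simp
    rw [hexp] at h
    exact h
  -- conclude M = s
  have hkey2 : (2 * (s:ℝ) - M) ^ 2 ≤ (s:ℝ) * M := by
    have hd : (2 * (s:ℝ) - M) ^ 2 / (s:ℝ) ≤ M := by linarith
    calc (2 * (s:ℝ) - M) ^ 2 = (2 * (s:ℝ) - M) ^ 2 / (s:ℝ) * (s:ℝ) := by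
          field_simp
      _ ≤ M * (s:ℝ) := mul_le_mul_of_nonneg_right hd (le_of_lt hSpos)
      _ = (s:ℝ) * M := mul_comm _ _
  have hMeq : M = (s:ℝ) := by
    have hge : (s:ℝ) ≤ M := by nlinarith [hkey2, hMle, hSpos, sq_nonneg ((s:ℝ) - M)]
    linarith
  -- each (s - k) * t k = 0
  have hzero : ∀ k ∈ range (s+1), ((s:ℝ) - (k:ℝ)) * t k = 0 := by
    have hsum : ∑ k ∈ range (s+1), ((s:ℝ) - (k:ℝ)) * t k = 0 := by
      have : ∑ k ∈ range (s+1), ((s:ℝ) - (k:ℝ)) * t k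
          = (s:ℝ) * (∑ k ∈ range (s+1), t k) - M := by
        rw [hM, Finset.mul_sum, ← Finset.sum_sub_distrib]
        refine Finset.sum_congr rfl fun k _ => ?_
        ring
      rw [this, h0, mul_one, hMeq]; ring
    intro k hk
    have hnn : ∀ k ∈ range (s+1), 0 ≤ ((s:ℝ) - (k:ℝ)) * t k := by
      intro k hk
      have : (k:ℝ) ≤ (s:ℝ) := by
        exact_mod_cast Nat.lt_succ_iff.mp (Finset.mem_range.mp hk)
      exact mul_nonneg (by linarith) (htnn k)
    exact (Finset.sum_eq_zero_iff_of_nonneg hnn).mp hsum k hk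
  have htk0 : ∀ k < s, t k = 0 := by
    intro k hk
    have h := hzero k (Finset.mem_range.mpr (Nat.lt_succ_of_lt hk))
    have hks : (k:ℝ) < (s:ℝ) := by exact_mod_cast hk
    rcases mul_eq_zero.mp h with h' | h'
    · linarith
    · exact h'
  have hQk0 : ∀ k < s, Q.coeff k = 0 := by
    intro k hk
    have := htk0 k hk
    rw [ht] at this
    simp only at this
    rcases mul_eq_zero.mp this with h' | h'
    · exact h'
    · exact absurd h' (by positivity)
  have hts : t s = 1 := by
    rw [← h0, Finset.sum_eq_single_of_mem s (Finset.mem_range.mpr (Nat.lt_succ_self s))]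
    intro k hk hne
    exact htk0 k (lt_of_le_of_ne (Nat.lt_succ_iff.mp (Finset.mem_range.mp hk)) hne)
  have hQs : Q.coeff s = (1/r) ^ s := by
    have : Q.coeff s * r ^ s = 1 := hts
    field_simp at this ⊢
    rw [div_pow, one_pow, eq_div_iff (pow_ne_zero _ hrne)]
    linarith
  -- pin down Q
  have hQform : Q = C ((1/r)^s) * X ^ s := by
    ext n
    rw [coeff_C_mul, coeff_X_pow]
    rcases lt_trichotomy n s with h | h | h
    · rw [hQk0 n h, if_neg (by omega)]; ring
    · subst h; rw [hQs, if_pos rfl]; ring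
    · rw [Q.coeff_eq_zero_of_natDegree_lt (lt_of_le_of_lt hQdeg h), if_neg (by omega)]
      ring
  have hkey : (1 : ℝ[X]) + C (1/r) * X = C (1/r) * (X + C r) := by
    rw [mul_add, ← C_mul, one_div, inv_mul_cancel₀ hrne, map_one]
    ring
  rw [hPQ, hQform, C_mul_X_pow_eq_monomial, taylor_monomial, hkey, mul_pow, ← C_pow]
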